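/- arXiv:2511.00298 — 3 statements merged into one kernel-verified Lean document; each statement's English description precedes it below -/
import Mathlib

section
/- Let d ≥ 1 and let G = (V,E) be a simple H_d-independent graph. Let G′ be obtained from G by a simple double 1-extension: delete an edge xy ∈ E, add two new vertices u and v, join u to d vertices of V including x, join v to d vertices of V including y, and add the edge uv. Then G′ is H_d-independent. -/
open Classical

/-- `p` is generic: the multiset of all coordinates of the points `p v` is
algebraically independent over `ℚ`. -/
def Generic (d : ℕ) {ν : Type*} (p : ν → Fin d → ℝ) : Prop :=
  AlgebraicIndependent ℚ (fun vi : ν × Fin d => p vi.1 vi.2)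

/-- The row of the hyperconnectivity matrix corresponding to an edge with first
endpoint `a` and second endpoint `b`: it has `p b` in the block of columns of `a`,
`−p a` in the block of columns of `b`, and `0` elsewhere. -/
noncomputable def hRow (d : ℕ) {ν : Type*} (p : ν → Fin d → ℝ) (a b : ν) :
    ν × Fin d → ℝ :=
  fun wi => (if wi.1 = a then p b wi.2 else 0) + (if wi.1 = b then -(p a wi.2) else 0)

/-- The row of the hyperconnectivity matrix of an edge `e`, with the endpoints
ordered by the fixed linear order on the vertices. -/
noncomputable def eRow (d : ℕ) {ν : Type*} [LinearOrder ν] (p : ν → Fin d → ℝ)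
    (e : Sym2 ν) : ν × Fin d → ℝ :=
  hRow d p
    (Sym2.lift ⟨fun a b => min a b, fun a b => min_comm a b⟩ e)
    (Sym2.lift ⟨fun a b => max a b, fun a b => max_comm a b⟩ e)

/-- The rows of `H(G,p)` indexed by the edges of `G` are linearly independent. -/
def HIndep (d : ℕ) {ν : Type*} [LinearOrder ν] (G : SimpleGraph ν)
    (p : ν → Fin d → ℝ) : Prop :=
  LinearIndependent ℝ (fun e : G.edgeSet => eRow d p e.1)


section DetAux
variable {F : Type*} [Field F]

lemma vecMul_zero_of_det {n : Type*} [Fintype n] [DecidableEq n]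
    {M : Matrix n n F} (hM : M.det ≠ 0) {g : n → F}
    (hg : Matrix.vecMul g M = 0) : g = 0 := by
  have hu : IsUnit M.det := isUnit_iff_ne_zero.2 hM
  calc g = Matrix.vecMul g (M * M⁻¹) := by rw [Matrix.mul_nonsing_inv M hu, Matrix.vecMul_one]
  _ = Matrix.vecMul (Matrix.vecMul g M) M⁻¹ := by rw [Matrix.vecMul_vecMul]
  _ = 0 := by rw [hg, Matrix.zero_vecMul]

lemma exists_det_ne_zero {α : Type*} :
    ∀ {n : ℕ} (v : Fin n → α → F), LinearIndependent F v →
      ∃ c : Fin n → α, (Matrix.of fun i j => v i (c j)).det ≠ 0 := by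
  intro n
  induction n with
  | zero =>
    intro v _
    exact ⟨Fin.elim0, by simp [Matrix.det_fin_zero]⟩
  | succ n ih =>
    intro v hv
    have hv' : LinearIndependent F (fun i : Fin n => v i.castSucc) :=
      hv.comp _ (Fin.castSucc_injective n)
    obtain ⟨c', hc'⟩ := ih _ hv'
    set A : Matrix (Fin n) (Fin n) F := Matrix.of fun i j => v i.castSucc (c' j) with hA
    have hAu : IsUnit A.det := isUnit_iff_ne_zero.2 hc'
    set b : Fin n → F := fun j => v (Fin.last n) (c' j) with hb
    set μ : Fin n → F := Matrix.vecMul b A⁻¹ with hμ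
    have hμA : Matrix.vecMul μ A = b := by
      rw [hμ, Matrix.vecMul_vecMul, Matrix.nonsing_inv_mul A hAu, Matrix.vecMul_one]
    set w : α → F := fun a => v (Fin.last n) a - ∑ i : Fin n, μ i * v i.castSucc a with hw
    have hwne : w ≠ 0 := by
      intro h0
      have : ∀ a, v (Fin.last n) a = ∑ i : Fin n, μ i * v i.castSucc a := by
        intro a
        have := congrFun h0 a
        simp only [hw, Pi.zero_apply, sub_eq_zero] at this
        exact this
      have hdep : ∑ i : Fin (n+1), (Fin.lastCases (-1) μ i : F) • v i = 0 := by
        rw [Fin.sum_univ_castSucc]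
        simp only [Fin.lastCases_castSucc, Fin.lastCases_last]
        funext a
        simp only [Pi.add_apply, Finset.sum_apply, Pi.smul_apply, smul_eq_mul, Pi.zero_apply,
          neg_one_mul, Pi.neg_apply]
        rw [← this a]
        ring
      have := Fintype.linearIndependent_iff.1 hv (fun i => Fin.lastCases (-1) μ i) hdep
        (Fin.last n)
      simp at this
    obtain ⟨a, ha⟩ := Function.ne_iff.1 hwne
    simp only [Pi.zero_apply] at ha
    set sn : Fin (n+1) → α := Fin.snoc c' a with hsn
    refine ⟨sn, ?_⟩
    intro hdet
    -- get a nonzero left-kernel vector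
    obtain ⟨g, hg0, hg⟩ := (Matrix.exists_vecMul_eq_zero_iff).2 hdet
    have hcol : ∀ j : Fin (n+1), ∑ i : Fin (n+1), g i * v i (sn j) = 0 := by
      intro j
      have := congrFun hg j
      simpa [Matrix.vecMul, dotProduct, hsn] using this
    set h : Fin n → F := fun i => g i.castSucc + g (Fin.last n) * μ i with hh
    have hhA : Matrix.vecMul h A = 0 := by
      funext j
      have h1 := hcol j.castSucc
      rw [Fin.sum_univ_castSucc] at h1
      simp only [hsn, Fin.snoc_castSucc] at h1
      have h2 : Matrix.vecMul μ A j = b j := congrFun hμA j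
      simp only [Matrix.vecMul, dotProduct] at h2 ⊢
      simp only [hh]
      calc ∑ i : Fin n, (g i.castSucc + g (Fin.last n) * μ i) * A i j
          = (∑ i : Fin n, g i.castSucc * v i.castSucc (c' j))
            + g (Fin.last n) * (∑ i : Fin n, μ i * A i j) := by
            rw [Finset.mul_sum, ← Finset.sum_add_distrib]
            refine Finset.sum_congr rfl fun i _ => by simp only [hA, Matrix.of_apply]; ring
      _ = (∑ i : Fin n, g i.castSucc * v i.castSucc (c' j)) + g (Fin.last n) * b j := by
            rw [h2]
      _ = 0 := by
            rw [hb] at *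
            linear_combination h1
    have hzero : h = 0 := vecMul_zero_of_det hc' hhA
    have hgc : ∀ i : Fin n, g i.castSucc = -(g (Fin.last n) * μ i) := by
      intro i
      have := congrFun hzero i
      simp only [hh, Pi.zero_apply] at this
      linear_combination this
    have hlast : g (Fin.last n) = 0 := by
      have h1 := hcol (Fin.last n)
      rw [Fin.sum_univ_castSucc] at h1
      simp only [hsn, Fin.snoc_last] at h1
      have : ∑ i : Fin n, g i.castSucc * v i.castSucc a
          = -(g (Fin.last n) * ∑ i : Fin n, μ i * v i.castSucc a) := by
        rw [Finset.mul_sum, ← Finset.sum_neg_distrib]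
        exact Finset.sum_congr rfl fun i _ => by rw [hgc i]; ring
      rw [this] at h1
      have hwa : g (Fin.last n) * w a = 0 := by
        simp only [hw]
        rw [mul_sub]
        linear_combination h1
      rcases mul_eq_zero.1 hwa with h | h
      · exact h
      · exact absurd h ha
    apply hg0
    funext i
    induction i using Fin.lastCases with
    | last => simpa using hlast
    | cast i => rw [hgc i, hlast]; simp

lemma exists_det_ne_zero' {α : Type*} {ι : Type*} [Fintype ι]
    (v : ι → α → F) (hv : LinearIndependent F v) :
    ∃ c : ι → α, (Matrix.of fun i j => v i (c j)).det ≠ 0 := by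
  obtain ⟨e⟩ : Nonempty (ι ≃ Fin (Fintype.card ι)) := ⟨Fintype.equivFinOfCardEq rfl⟩
  have hv' : LinearIndependent F (fun i => v (e.symm i)) := hv.comp _ e.symm.injective
  obtain ⟨c0, hc0⟩ := exists_det_ne_zero _ hv'
  refine ⟨fun i => c0 (e i), ?_⟩
  have : (Matrix.of fun i j => v i (c0 (e j))).submatrix e.symm e.symm
      = Matrix.of fun i j => v (e.symm i) (c0 j) := by
    ext i j
    simp [Matrix.submatrix]
  rw [← Matrix.det_submatrix_equiv_self e.symm, this]
  exact hc0

lemma det_kernel_triv {n : Type*} [Fintype n] [DecidableEq n]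
    {M : Matrix n n F} (hM : M.det ≠ 0) : ∀ g : n → F, Matrix.vecMul g M = 0 → g = 0 :=
  fun _ hg => vecMul_zero_of_det hM hg

lemma exists_good_cols {α : Type*} {ι : Type*} [Fintype ι]
    (v : ι → α → F) (hv : LinearIndependent F v) :
    ∃ c : ι → α, ∀ g : ι → F, (∀ j : ι, ∑ i : ι, g i * v i (c j) = 0) → g = 0 := by
  obtain ⟨c, hc⟩ := exists_det_ne_zero' v hv
  refine ⟨c, fun g hg => ?_⟩
  refine det_kernel_triv hc g ?_
  funext j
  simp only [Matrix.vecMul, dotProduct, Matrix.of_apply, Pi.zero_apply]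
  exact hg j

end DetAux

section Aux
variable {ν : Type*} [LinearOrder ν] {d : ℕ}

/-- sign of an ordered pair of vertices -/
noncomputable def sgn (a b : ν) : ℝ := if a ≤ b then 1 else -1

lemma sgn_mul_self (a b : ν) : sgn a b * sgn a b = 1 := by
  unfold sgn; split_ifs <;> norm_num

lemma sgn_ne_zero (a b : ν) : sgn a b ≠ 0 := by
  unfold sgn; split_ifs <;> norm_num

lemma eRow_eq_smul (p : ν → Fin d → ℝ) (a b : ν) :
    eRow d p s(a,b) = sgn a b • hRow d p a b := by
  rcases le_or_gt a b with h | h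
  · have h1 : Sym2.lift ⟨fun a b => min a b, fun a b => min_comm a b⟩ s(a,b) = a := by
      simp [min_eq_left h]
    have h2 : Sym2.lift ⟨fun a b => max a b, fun a b => max_comm a b⟩ s(a,b) = b := by
      simp [max_eq_right h]
    simp [eRow, h1, h2, sgn, h]
  · have h1 : Sym2.lift ⟨fun a b => min a b, fun a b => min_comm a b⟩ s(a,b) = b := by
      simp [min_eq_right h.le]
    have h2 : Sym2.lift ⟨fun a b => max a b, fun a b => max_comm a b⟩ s(a,b) = a := by
      simp [max_eq_left h.le]
    funext wi
    simp only [eRow, h1, h2, sgn, if_neg (not_le.2 h), hRow, Pi.smul_apply, smul_eq_mul]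
    split_ifs <;> ring

lemma eRow_apply_fst (p : ν → Fin d → ℝ) {a b : ν} (hab : a ≠ b) (k : Fin d) :
    eRow d p s(a,b) (a,k) = sgn a b * p b k := by
  rw [eRow_eq_smul]
  simp [hRow, hab, Pi.smul_apply]

lemma eRow_apply_snd (p : ν → Fin d → ℝ) {a b : ν} (hab : a ≠ b) (k : Fin d) :
    eRow d p s(a,b) (b,k) = -(sgn a b * p a k) := by
  rw [eRow_eq_smul]
  simp [hRow, Ne.symm hab, Pi.smul_apply]

lemma eRow_apply_notMem (p : ν → Fin d → ℝ) {e : Sym2 ν} {c : ν} (hc : c ∉ e) (k : Fin d) :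
    eRow d p e (c,k) = 0 := by
  induction e using Sym2.ind with
  | _ a b =>
    rw [Sym2.mem_iff] at hc
    push_neg at hc
    rw [eRow_eq_smul]
    simp [hRow, hc.1, hc.2, Pi.smul_apply]

lemma eRow_congr (p q : ν → Fin d → ℝ) (e : Sym2 ν) (h : ∀ c ∈ e, q c = p c) :
    eRow d q e = eRow d p e := by
  induction e using Sym2.ind with
  | _ a b =>
    have ha := h a (Sym2.mem_mk_left a b)
    have hb := h b (Sym2.mem_mk_right a b)
    have : hRow d q a b = hRow d p a b := by
      unfold hRow; rw [ha, hb]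
    rw [eRow_eq_smul, eRow_eq_smul, this]

end Aux

section Generic
variable {ν : Type*} [LinearOrder ν] {d : ℕ}
open MvPolynomial

/-- symbolic version of `eRow` -/
noncomputable def polyRow (d : ℕ) (e : Sym2 ν) : ν × Fin d → MvPolynomial (ν × Fin d) ℚ :=
  fun wi =>
    (if wi.1 = Sym2.lift ⟨fun a b => min a b, fun a b => min_comm a b⟩ e then
      X (Sym2.lift ⟨fun a b => max a b, fun a b => max_comm a b⟩ e, wi.2) else 0) +
    (if wi.1 = Sym2.lift ⟨fun a b => max a b, fun a b => max_comm a b⟩ e then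
      -(X (Sym2.lift ⟨fun a b => min a b, fun a b => min_comm a b⟩ e, wi.2)) else 0)

lemma aeval_polyRow (p : ν → Fin d → ℝ) (e : Sym2 ν) (wi : ν × Fin d) :
    aeval (fun vi : ν × Fin d => p vi.1 vi.2) (polyRow d e wi) = eRow d p e wi := by
  simp only [polyRow, eRow, hRow, map_add]
  congr 1 <;> split_ifs <;> simp

lemma generic_injective {p : ν → Fin d → ℝ} (hp : Generic d p) :
    Function.Injective (aeval (fun vi : ν × Fin d => p vi.1 vi.2) :
      MvPolynomial (ν × Fin d) ℚ →ₐ[ℚ] ℝ) := hp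

lemma generic_aeval_ne_zero {p : ν → Fin d → ℝ} (hp : Generic d p)
    {P : MvPolynomial (ν × Fin d) ℚ} (hP : P ≠ 0) :
    aeval (fun vi : ν × Fin d => p vi.1 vi.2) P ≠ 0 := by
  intro h
  exact hP (generic_injective hp (by rw [h, map_zero]))

/-- the points of a generic configuration indexed by a `d`-element set are
linearly independent -/
lemma generic_rows_indep {p : ν → Fin d → ℝ} (hp : Generic d p)
    (D : Finset ν) (hD : D.card = d) :
    LinearIndependent ℝ (fun w : ↥D => p ↑w) := by
  have hcard : Fintype.card ↥D = d := by simp [hD]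
  obtain ⟨eqv⟩ : Nonempty (↥D ≃ Fin d) := ⟨Fintype.equivFinOfCardEq hcard⟩
  set M : Matrix (Fin d) (Fin d) ℝ := Matrix.of fun i j => p ↑(eqv.symm i) j with hM
  set Pm : Matrix (Fin d) (Fin d) (MvPolynomial (ν × Fin d) ℚ) :=
    Matrix.of fun i j => X (↑(eqv.symm i), j) with hPm
  have hmap : Pm.map (aeval (fun vi : ν × Fin d => p vi.1 vi.2)) = M := by
    ext i j; simp [hPm, hM]
  have hPdet : Pm.det ≠ 0 := by
    intro h0
    set q0 : ν × Fin d → ℚ := fun wi =>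
      if h : wi.1 ∈ D then (if eqv ⟨wi.1, h⟩ = wi.2 then 1 else 0) else 0 with hq0
    have h1 : Pm.map (aeval q0) = (1 : Matrix (Fin d) (Fin d) ℚ) := by
      ext i j
      simp only [Matrix.map_apply, hPm, Matrix.of_apply, aeval_X, hq0]
      rw [dif_pos (eqv.symm i).2]
      have : (⟨↑(eqv.symm i), (eqv.symm i).2⟩ : ↥D) = eqv.symm i := rfl
      rw [this, Equiv.apply_symm_apply]
      by_cases h : i = j
      · simp [h, Matrix.one_apply]
      · simp [h, Matrix.one_apply, Ne.symm h]
    have h2 : aeval q0 Pm.det = 1 := by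
      have hc := RingHom.map_det
        ((aeval q0 : MvPolynomial (ν × Fin d) ℚ →ₐ[ℚ] ℚ) : MvPolynomial (ν × Fin d) ℚ →+* ℚ) Pm
      simp only [RingHom.mapMatrix_apply, RingHom.coe_coe] at hc
      rw [hc, h1, Matrix.det_one]
    rw [h0, map_zero] at h2
    exact zero_ne_one h2
  have hdet : M.det ≠ 0 := by
    have hc := RingHom.map_det
      ((aeval (fun vi : ν × Fin d => p vi.1 vi.2) : MvPolynomial (ν × Fin d) ℚ →ₐ[ℚ] ℝ) :
        MvPolynomial (ν × Fin d) ℚ →+* ℝ) Pm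
    simp only [RingHom.mapMatrix_apply, RingHom.coe_coe] at hc
    rw [← hmap, ← hc]
    exact generic_aeval_ne_zero hp hPdet
  rw [Fintype.linearIndependent_iff]
  intro g hg w
  have hvec : ∀ j : Fin d, ∑ i : Fin d, (g (eqv.symm i)) * M i j = 0 := by
    intro j
    have := congrFun hg j
    simp only [Finset.sum_apply, Pi.smul_apply, smul_eq_mul, Pi.zero_apply] at this
    rw [← this]
    exact (Equiv.sum_comp eqv.symm (fun w => g w * p ↑w j)).symm ▸
      (Equiv.sum_comp eqv.symm fun w => g w * p (↑w) j)
  have hvm : Matrix.vecMul (fun i => g (eqv.symm i)) M = 0 := by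
    funext j
    simpa [Matrix.vecMul, dotProduct] using hvec j
  have hu : IsUnit M.det := isUnit_iff_ne_zero.2 hdet
  have hzero : (fun i => g (eqv.symm i)) = 0 := by
    calc (fun i => g (eqv.symm i))
        = Matrix.vecMul (fun i => g (eqv.symm i)) (M * M⁻¹) := by
          rw [Matrix.mul_nonsing_inv M hu, Matrix.vecMul_one]
    _ = Matrix.vecMul (Matrix.vecMul (fun i => g (eqv.symm i)) M) M⁻¹ := by
          rw [Matrix.vecMul_vecMul]
    _ = 0 := by rw [hvm, Matrix.zero_vecMul]
  have := congrFun hzero (eqv w)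
  simpa using this

end Generic

section Transfer
variable {ν : Type*} [LinearOrder ν] {d : ℕ}
open MvPolynomial

omit [LinearOrder ν] in
lemma det_map_aeval {S : Type*} [CommRing S] [Algebra ℚ S] {n : Type*} [Fintype n] [DecidableEq n]
    (f : ν × Fin d → S) (Pm : Matrix n n (MvPolynomial (ν × Fin d) ℚ)) :
    aeval f Pm.det = (Pm.map (aeval f)).det := by
  have hc := RingHom.map_det
    ((aeval f : MvPolynomial (ν × Fin d) ℚ →ₐ[ℚ] S) : MvPolynomial (ν × Fin d) ℚ →+* S) Pm
  simpa only [RingHom.mapMatrix_apply, RingHom.coe_coe] using hc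

set_option maxHeartbeats 1000000 in
theorem eRow_transfer {p : ν → Fin d → ℝ} (hp : Generic d p) {ι : Type*} (v : ι → Sym2 ν)
    (q : ν → Fin d → ℝ) (hq : LinearIndependent ℝ (fun i => eRow d q (v i))) :
    LinearIndependent ℝ (fun i => eRow d p (v i)) := by
  rw [linearIndependent_iff]
  intro l hl
  set S := l.support with hS
  have hqS : LinearIndependent ℝ (fun e : ↥S => eRow d q (v ↑e)) :=
    hq.comp _ Subtype.val_injective
  obtain ⟨c, hker⟩ := exists_good_cols _ hqS
  -- local kernel-triviality from nonzero det
  have key : ∀ (M : Matrix ↥S ↥S ℝ), M.det ≠ 0 → ∀ g : ↥S → ℝ,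
      Matrix.vecMul g M = 0 → g = 0 := by
    intro M hM g hg
    have hu : IsUnit M.det := isUnit_iff_ne_zero.2 hM
    calc g = Matrix.vecMul g (M * M⁻¹) := by
            rw [Matrix.mul_nonsing_inv M hu, Matrix.vecMul_one]
    _ = Matrix.vecMul (Matrix.vecMul g M) M⁻¹ := by rw [Matrix.vecMul_vecMul]
    _ = 0 := by rw [hg, Matrix.zero_vecMul]
  -- the matrix at q has nonzero determinant
  set Mq : Matrix ↥S ↥S ℝ := Matrix.of fun e f => eRow d q (v ↑e) (c f) with hMq
  have hdetq : Mq.det ≠ 0 := by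
    intro h0
    obtain ⟨g, hg0, hg⟩ := (Matrix.exists_vecMul_eq_zero_iff).2 h0
    apply hg0
    apply hker
    intro j
    have := congrFun hg j
    simpa [hMq, Matrix.vecMul, dotProduct] using this
  -- polynomial bridge
  set Pm : Matrix ↥S ↥S (MvPolynomial (ν × Fin d) ℚ) :=
    Matrix.of fun (e f : ↥S) => polyRow d (v ↑e) (c f) with hPm
  have hmapq : Pm.map (aeval fun vi : ν × Fin d => q vi.1 vi.2) = Mq := by
    ext e f; simp [hPm, hMq, aeval_polyRow]
  have hPdet : Pm.det ≠ 0 := by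
    intro h0
    have h1 := det_map_aeval (fun vi : ν × Fin d => q vi.1 vi.2) Pm
    rw [h0, map_zero, hmapq] at h1
    exact hdetq h1.symm
  set Mp : Matrix ↥S ↥S ℝ := Matrix.of fun e f => eRow d p (v ↑e) (c f) with hMp
  have hmapp : Pm.map (aeval fun vi : ν × Fin d => p vi.1 vi.2) = Mp := by
    ext e f; simp [hPm, hMp, aeval_polyRow]
  have hdetp : Mp.det ≠ 0 := by
    have h1 := det_map_aeval (fun vi : ν × Fin d => p vi.1 vi.2) Pm
    rw [hmapp] at h1
    rw [← h1]
    exact generic_aeval_ne_zero hp hPdet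
  -- the dependency dies
  have hcol : ∀ f : ↥S, ∑ e ∈ S, l e * eRow d p (v e) (c f) = 0 := by
    intro f
    rw [Finsupp.linearCombination_apply] at hl
    have h2 := congrFun hl (c f)
    simp only [Finsupp.sum, Finset.sum_apply, Pi.smul_apply, smul_eq_mul,
      Pi.zero_apply] at h2
    exact h2
  have hvm : Matrix.vecMul (fun e : ↥S => l ↑e) Mp = 0 := by
    funext f
    simp only [hMp, Matrix.vecMul, dotProduct, Matrix.of_apply, Pi.zero_apply]
    rw [Finset.sum_coe_sort S (fun e => l e * eRow d p (v e) (c f))]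
    exact hcol f
  have hzero := key Mp hdetp _ hvm
  ext i
  by_cases hi : i ∈ S
  · have := congrFun hzero ⟨i, hi⟩
    simpa using this
  · simpa using Finsupp.notMem_support_iff.1 hi

end Transfer

set_option maxHeartbeats 2000000 in
/-- a simple double 1-extension (delete an edge `xy`, add two new
vertices `u,v`, join `u` to `d` vertices of `V` including `x`, join `v` to `d`
vertices of `V` including `y`, and add the edge `uv`) preserves `H_d`-independence. -/
theorem hIndep_double_one_extension {ν : Type*} [LinearOrder ν] (d : ℕ) (hd : 1 ≤ d)
    (G : SimpleGraph ν)
    (hG : ∀ p : ν → Fin d → ℝ, Generic d p → HIndep d G p)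
    (x y : ν) (hxy : G.Adj x y)
    (u v : ν) (hu : ∀ w, ¬ G.Adj u w) (hv : ∀ w, ¬ G.Adj v w) (huv : u ≠ v)
    (Du Dv : Finset ν) (hDu : Du.card = d) (hDv : Dv.card = d)
    (hxDu : x ∈ Du) (hyDv : y ∈ Dv)
    (huDu : u ∉ Du) (huDv : u ∉ Dv) (hvDu : v ∉ Du) (hvDv : v ∉ Dv)
    (G' : SimpleGraph ν)
    (hG' : G' = (G.deleteEdges {s(x, y)}) ⊔ SimpleGraph.fromEdgeSet
      (({e | ∃ w ∈ Du, e = s(u, w)} ∪ {e | ∃ w ∈ Dv, e = s(v, w)}) ∪ {s(u, v)})) :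
    ∀ p : ν → Fin d → ℝ, Generic d p → HIndep d G' p := by
  intro p hp
  -- basic distinctness facts
  have hux : u ≠ x := fun h => hu y (h ▸ hxy)
  have huy : u ≠ y := fun h => hu x (h ▸ hxy.symm)
  have hvx : v ≠ x := fun h => hv y (h ▸ hxy)
  have hvy : v ≠ y := fun h => hv x (h ▸ hxy.symm)
  have hxyne : x ≠ y := hxy.ne
  -- characterization of the edge set of G'
  have hE' : ∀ e : Sym2 ν, e ∈ G'.edgeSet ↔
      ((e ∈ G.edgeSet ∧ e ≠ s(x,y)) ∨ (∃ w ∈ Du, e = s(u,w)) ∨ (∃ w ∈ Dv, e = s(v,w))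
        ∨ e = s(u,v)) := by
    intro e
    rw [hG', SimpleGraph.edgeSet_sup, SimpleGraph.edgeSet_deleteEdges,
      SimpleGraph.edgeSet_fromEdgeSet]
    constructor
    · rintro (⟨he, hne⟩ | ⟨he, -⟩)
      · exact Or.inl ⟨he, by simpa using hne⟩
      · rcases he with (h | h) | h
        · obtain ⟨w, hw, rfl⟩ := h
          exact Or.inr (Or.inl ⟨w, hw, rfl⟩)
        · obtain ⟨w, hw, rfl⟩ := h
          exact Or.inr (Or.inr (Or.inl ⟨w, hw, rfl⟩))
        · exact Or.inr (Or.inr (Or.inr (by simpa using h)))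
    · rintro (⟨he, hne⟩ | ⟨w, hw, rfl⟩ | ⟨w, hw, rfl⟩ | rfl)
      · exact Or.inl ⟨he, by simpa using hne⟩
      · refine Or.inr ⟨Or.inl (Or.inl ⟨w, hw, rfl⟩), ?_⟩
        simp only [Sym2.mem_diagSet, Set.mem_setOf_eq, Sym2.isDiag_iff_proj_eq]
        exact fun h => huDu (by rwa [h])
      · refine Or.inr ⟨Or.inl (Or.inr ⟨w, hw, rfl⟩), ?_⟩
        simp only [Sym2.mem_diagSet, Set.mem_setOf_eq, Sym2.isDiag_iff_proj_eq]
        exact fun h => hvDv (by rwa [h])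
      · refine Or.inr ⟨Or.inr rfl, ?_⟩
        simp only [Sym2.mem_diagSet, Set.mem_setOf_eq, Sym2.isDiag_iff_proj_eq]
        exact huv
  -- G-edges avoid u and v
  have hGe : ∀ e ∈ G.edgeSet, u ∉ e ∧ v ∉ e := by
    intro e he
    induction e using Sym2.ind with
    | _ a b =>
      rw [SimpleGraph.mem_edgeSet] at he
      constructor <;> intro hm <;> rw [Sym2.mem_iff] at hm
      · rcases hm with rfl | rfl
        · exact hu b he
        · exact hu a he.symm
      · rcases hm with rfl | rfl
        · exact hv b he
        · exact hv a he.symm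
  -- the special configuration
  set q : ν → Fin d → ℝ := fun w => if w = u then p y else if w = v then p x else p w
    with hqdef
  have hqu : q u = p y := by simp [hqdef]
  have hqv : q v = p x := by simp [hqdef, (Ne.symm huv)]
  have hqo : ∀ w, w ≠ u → w ≠ v → q w = p w := by
    intro w h1 h2; simp [hqdef, h1, h2]
  -- reduce to independence at q
  show LinearIndependent ℝ (fun e : G'.edgeSet => eRow d p e.1)
  apply eRow_transfer hp (fun e : G'.edgeSet => (e : Sym2 ν)) q
  rw [linearIndependent_iff]
  intro l hl
  set L : Sym2 ν → ℝ := fun e => if h : e ∈ G'.edgeSet then l ⟨e, h⟩ else 0 with hLdef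
  have hLval : ∀ (e : Sym2 ν) (h : e ∈ G'.edgeSet), L e = l ⟨e, h⟩ := fun e h => dif_pos h
  set V₀ : Finset (Sym2 ν) := l.support.image Subtype.val with hV₀
  have hLmem : ∀ e : Sym2 ν, L e ≠ 0 → e ∈ V₀ := by
    intro e hLe
    by_cases h : e ∈ G'.edgeSet
    · rw [hLval e h] at hLe
      exact Finset.mem_image.2 ⟨⟨e, h⟩, Finsupp.mem_support_iff.2 hLe, rfl⟩
    · exact absurd (dif_neg h) hLe
  have hLnot : ∀ e : Sym2 ν, e ∉ V₀ → L e = 0 := by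
    intro e he
    by_contra h
    exact he (hLmem e h)
  have hV₀E : ∀ e ∈ V₀, e ∈ G'.edgeSet := by
    intro e he
    obtain ⟨e', _, rfl⟩ := Finset.mem_image.1 he
    exact e'.2
  -- column equations
  have H0 : ∀ ck : ν × Fin d, ∑ e ∈ V₀, L e * eRow d q e ck = 0 := by
    intro ck
    rw [Finsupp.linearCombination_apply] at hl
    have h2 := congrFun hl ck
    simp only [Finsupp.sum, Finset.sum_apply, Pi.smul_apply, smul_eq_mul,
      Pi.zero_apply] at h2
    rw [← h2, hV₀, Finset.sum_image (fun a _ b _ hab => Subtype.val_injective hab)]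
    refine Finset.sum_congr rfl fun e _ => ?_
    rw [hLval ↑e e.2, Subtype.coe_eta]
  -- helper for re-indexing sums
  have hsum_eq : ∀ (A B : Finset (Sym2 ν)) (f : Sym2 ν → ℝ),
      (∀ e ∈ A, e ∉ B → f e = 0) → (∀ e ∈ B, e ∉ A → f e = 0) →
      ∑ e ∈ A, f e = ∑ e ∈ B, f e := by
    intro A B f hA hB
    rw [Finset.sum_subset (show A ⊆ A ∪ B from Finset.subset_union_left)
      (fun e he hne => hB e ((Finset.mem_union.1 he).resolve_left hne) hne)]
    rw [Finset.sum_subset (show B ⊆ A ∪ B from Finset.subset_union_right)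
      (fun e he hne => hA e ((Finset.mem_union.1 he).resolve_right hne) hne)]
  ---- u-column analysis
  have hinj_u : ∀ a ∈ Du, ∀ b ∈ Du, s(u,a) = s(u,b) → a = b := by
    intro a ha b hb hab
    rw [Sym2.eq_iff] at hab
    rcases hab with ⟨-, h⟩ | ⟨h1, -⟩
    · exact h
    · exact absurd (by rwa [h1] : u ∈ Du) huDu
  have hne_uv_imu : s(u,v) ∉ Du.image (fun w => s(u,w)) := by
    simp only [Finset.mem_image]
    rintro ⟨w, hw, hww⟩
    rw [Sym2.eq_iff] at hww
    rcases hww with ⟨-, h⟩ | ⟨h, -⟩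
    · exact hvDu (by rwa [← h])
    · exact huv h
  have hIu : ∀ k : Fin d,
      L s(u,v) * (sgn u v * p x k) + ∑ w ∈ Du, L s(u,w) * (sgn u w * p w k) = 0 := by
    intro k
    have h1 := H0 (u, k)
    have hcov : ∑ e ∈ V₀, L e * eRow d q e (u,k)
        = ∑ e ∈ insert s(u,v) (Du.image fun w => s(u,w)), L e * eRow d q e (u,k) := by
      refine hsum_eq _ _ _ ?_ ?_
      · intro e he hne
        show L e * eRow d q e (u,k) = 0
        rcases (hE' e).1 (hV₀E e he) with ⟨heG, -⟩ | ⟨w, hw, rfl⟩ | ⟨w, hw, rfl⟩ | rfl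
        · rw [eRow_apply_notMem q (hGe e heG).1 k, mul_zero]
        · exact absurd (Finset.mem_insert_of_mem (Finset.mem_image.2 ⟨w, hw, rfl⟩)) hne
        · have hnm : u ∉ s(v,w) := by
            rw [Sym2.mem_iff]
            rintro (rfl | rfl)
            · exact huv rfl
            · exact huDv hw
          rw [eRow_apply_notMem q hnm k, mul_zero]
        · exact absurd (Finset.mem_insert_self _ _) hne
      · intro e _ hne
        show L e * eRow d q e (u,k) = 0
        rw [hLnot e hne, zero_mul]
    rw [hcov, Finset.sum_insert hne_uv_imu, Finset.sum_image hinj_u] at h1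
    rw [eRow_apply_fst q huv k, show q v k = p x k from congrFun hqv k] at h1
    have hrw : ∑ w ∈ Du, L s(u,w) * eRow d q s(u,w) (u,k)
        = ∑ w ∈ Du, L s(u,w) * (sgn u w * p w k) := by
      refine Finset.sum_congr rfl fun w hw => ?_
      have hwu : u ≠ w := fun h => huDu (by rwa [h])
      have hwv : w ≠ v := fun h => hvDu (by rwa [← h])
      rw [eRow_apply_fst q hwu k,
        show q w k = p w k from congrFun (hqo w (Ne.symm hwu) hwv) k]
    rw [hrw] at h1
    exact h1
  set Au : ν → ℝ := fun w =>
    L s(u,w) * sgn u w + (if w = x then L s(u,v) * sgn u v else 0) with hAudef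
  have hAzero : ∀ w ∈ Du, Au w = 0 := by
    have hAvec : ∑ w ∈ Du, Au w • (p w) = (0 : Fin d → ℝ) := by
      funext k
      rw [Finset.sum_apply, Pi.zero_apply]
      have expand : ∀ w ∈ Du, (Au w • p w) k
          = L s(u,w) * (sgn u w * p w k)
            + (if w = x then L s(u,v) * (sgn u v * p w k) else 0) := by
        intro w _
        simp only [hAudef, Pi.smul_apply, smul_eq_mul]
        split_ifs <;> ring
      rw [Finset.sum_congr rfl expand, Finset.sum_add_distrib,
        Finset.sum_ite_eq' Du x (fun w => L s(u,v) * (sgn u v * p w k)), if_pos hxDu]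
      linear_combination hIu k
    intro w hw
    have hind := generic_rows_indep hp Du hDu
    rw [linearIndependent_iff'] at hind
    refine hind Finset.univ (fun ww : ↥Du => Au ↑ww) ?_ ⟨w, hw⟩ (Finset.mem_univ _)
    rw [Finset.sum_coe_sort Du (fun w => Au w • p w)]
    exact hAvec
  have hLu0 : ∀ w ∈ Du, w ≠ x → L s(u,w) = 0 := by
    intro w hw hwx
    have h0 := hAzero w hw
    simp only [hAudef, if_neg hwx, add_zero] at h0
    calc L s(u,w) = L s(u,w) * (sgn u w * sgn u w) := by rw [sgn_mul_self, mul_one]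
    _ = (L s(u,w) * sgn u w) * sgn u w := by ring
    _ = 0 := by rw [h0, zero_mul]
  have hLux : L s(u,x) * sgn u x + L s(u,v) * sgn u v = 0 := by
    have h0 := hAzero x hxDu
    simpa only [hAudef, if_pos rfl, ↓reduceIte] using h0
  ---- v-column analysis
  have hinj_v : ∀ a ∈ Dv, ∀ b ∈ Dv, s(v,a) = s(v,b) → a = b := by
    intro a ha b hb hab
    rw [Sym2.eq_iff] at hab
    rcases hab with ⟨-, h⟩ | ⟨h1, -⟩
    · exact h
    · exact absurd (by rwa [h1] : v ∈ Dv) hvDv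
  have hne_uv_imv : s(u,v) ∉ Dv.image (fun w => s(v,w)) := by
    simp only [Finset.mem_image]
    rintro ⟨w, hw, hww⟩
    rw [Sym2.eq_iff] at hww
    rcases hww with ⟨h, -⟩ | ⟨-, h⟩
    · exact huv h.symm
    · exact huDv (by rwa [← h])
  have hIv : ∀ k : Fin d,
      L s(u,v) * (-(sgn u v * p y k)) + ∑ w ∈ Dv, L s(v,w) * (sgn v w * p w k) = 0 := by
    intro k
    have h1 := H0 (v, k)
    have hcov : ∑ e ∈ V₀, L e * eRow d q e (v,k)
        = ∑ e ∈ insert s(u,v) (Dv.image fun w => s(v,w)), L e * eRow d q e (v,k) := by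
      refine hsum_eq _ _ _ ?_ ?_
      · intro e he hne
        show L e * eRow d q e (v,k) = 0
        rcases (hE' e).1 (hV₀E e he) with ⟨heG, -⟩ | ⟨w, hw, rfl⟩ | ⟨w, hw, rfl⟩ | rfl
        · rw [eRow_apply_notMem q (hGe e heG).2 k, mul_zero]
        · have hnm : v ∉ s(u,w) := by
            rw [Sym2.mem_iff]
            rintro (rfl | rfl)
            · exact huv rfl
            · exact hvDu hw
          rw [eRow_apply_notMem q hnm k, mul_zero]
        · exact absurd (Finset.mem_insert_of_mem (Finset.mem_image.2 ⟨w, hw, rfl⟩)) hne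
        · exact absurd (Finset.mem_insert_self _ _) hne
      · intro e _ hne
        show L e * eRow d q e (v,k) = 0
        rw [hLnot e hne, zero_mul]
    rw [hcov, Finset.sum_insert hne_uv_imv, Finset.sum_image hinj_v] at h1
    rw [eRow_apply_snd q huv k, show q u k = p y k from congrFun hqu k] at h1
    have hrw : ∑ w ∈ Dv, L s(v,w) * eRow d q s(v,w) (v,k)
        = ∑ w ∈ Dv, L s(v,w) * (sgn v w * p w k) := by
      refine Finset.sum_congr rfl fun w hw => ?_
      have hwv : v ≠ w := fun h => hvDv (by rwa [h])
      have hwu : w ≠ u := fun h => huDv (by rwa [← h])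
      rw [eRow_apply_fst q hwv k,
        show q w k = p w k from congrFun (hqo w hwu (Ne.symm hwv)) k]
    rw [hrw] at h1
    exact h1
  set Bv : ν → ℝ := fun w =>
    L s(v,w) * sgn v w + (if w = y then -(L s(u,v) * sgn u v) else 0) with hBvdef
  have hBzero : ∀ w ∈ Dv, Bv w = 0 := by
    have hBvec : ∑ w ∈ Dv, Bv w • (p w) = (0 : Fin d → ℝ) := by
      funext k
      rw [Finset.sum_apply, Pi.zero_apply]
      have expand : ∀ w ∈ Dv, (Bv w • p w) k
          = L s(v,w) * (sgn v w * p w k)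
            + (if w = y then -(L s(u,v) * (sgn u v * p w k)) else 0) := by
        intro w _
        simp only [hBvdef, Pi.smul_apply, smul_eq_mul]
        split_ifs <;> ring
      rw [Finset.sum_congr rfl expand, Finset.sum_add_distrib,
        Finset.sum_ite_eq' Dv y (fun w => -(L s(u,v) * (sgn u v * p w k))), if_pos hyDv]
      linear_combination hIv k
    intro w hw
    have hind := generic_rows_indep hp Dv hDv
    rw [linearIndependent_iff'] at hind
    refine hind Finset.univ (fun ww : ↥Dv => Bv ↑ww) ?_ ⟨w, hw⟩ (Finset.mem_univ _)
    rw [Finset.sum_coe_sort Dv (fun w => Bv w • p w)]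
    exact hBvec
  have hLv0 : ∀ w ∈ Dv, w ≠ y → L s(v,w) = 0 := by
    intro w hw hwy
    have h0 := hBzero w hw
    simp only [hBvdef, if_neg hwy, add_zero] at h0
    calc L s(v,w) = L s(v,w) * (sgn v w * sgn v w) := by rw [sgn_mul_self, mul_one]
    _ = (L s(v,w) * sgn v w) * sgn v w := by ring
    _ = 0 := by rw [h0, zero_mul]
  have hLvy : L s(v,y) * sgn v y - L s(u,v) * sgn u v = 0 := by
    have h0 := hBzero y hyDv
    simp only [hBvdef, eq_self_iff_true, if_true] at h0
    linear_combination h0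
  ---- construct the dependency among the rows of G
  set t : ℝ := L s(u,v) with htdef
  have hLxy : L s(x,y) = 0 := by
    have hno : s(x,y) ∉ G'.edgeSet := by
      rw [hE']
      rintro (⟨-, hne⟩ | ⟨w, hw, hww⟩ | ⟨w, hw, hww⟩ | hww)
      · exact hne rfl
      · rw [Sym2.eq_iff] at hww
        rcases hww with ⟨h, -⟩ | ⟨-, h⟩
        · exact hux h.symm
        · exact huy h.symm
      · rw [Sym2.eq_iff] at hww
        rcases hww with ⟨h, -⟩ | ⟨-, h⟩
        · exact hvx h.symm
        · exact hvy h.symm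
      · rw [Sym2.eq_iff] at hww
        rcases hww with ⟨h, -⟩ | ⟨h, -⟩
        · exact hux h.symm
        · exact hvx h.symm
    exact dif_neg hno
  -- the four distinguished edges are distinct
  have hd1 : s(x,y) ≠ s(u,x) := by
    intro hee
    rw [Sym2.eq_iff] at hee
    rcases hee with (⟨h, -⟩ | ⟨-, h⟩)
    · exact hux h.symm
    · exact huy h.symm
  have hd2 : s(x,y) ≠ s(v,y) := by
    intro hee
    rw [Sym2.eq_iff] at hee
    rcases hee with (⟨h, -⟩ | ⟨-, h⟩)
    · exact hvx h.symm
    · exact hvy h.symm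
  have hd3 : s(x,y) ≠ s(u,v) := by
    intro hee
    rw [Sym2.eq_iff] at hee
    rcases hee with (⟨h, -⟩ | ⟨h, -⟩)
    · exact hux h.symm
    · exact hvx h.symm
  have hd4 : s(u,x) ≠ s(v,y) := by
    intro hee
    rw [Sym2.eq_iff] at hee
    rcases hee with (⟨h, -⟩ | ⟨-, h⟩)
    · exact huv h
    · exact hvx h.symm
  have hd5 : s(u,x) ≠ s(u,v) := by
    intro hee
    rw [Sym2.eq_iff] at hee
    rcases hee with (⟨-, h⟩ | ⟨h, -⟩)
    · exact hvx h.symm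
    · exact huv h
  have hd6 : s(v,y) ≠ s(u,v) := by
    intro hee
    rw [Sym2.eq_iff] at hee
    rcases hee with (⟨h, -⟩ | ⟨-, h⟩)
    · exact huv h.symm
    · exact huy h.symm
  set V' : Finset (Sym2 ν) :=
    insert s(x,y) (insert s(u,x) (insert s(v,y) (insert s(u,v) V₀))) with hV'def
  have hV₀V' : V₀ ⊆ V' := by
    intro e he
    simp only [hV'def, Finset.mem_insert]
    tauto
  set c0 : Sym2 ν → ℝ := fun e => if e = s(x,y) then sgn u v * sgn x y * t else L e
    with hc0def
  -- the identity between the four special rows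
  have hIdent : ∀ ck : ν × Fin d,
      hRow d p x y ck + hRow d q u x ck - hRow d q v y ck - hRow d q u v ck = 0 := by
    intro ck
    have e1 : q x ck.2 = p x ck.2 := congrFun (hqo x (Ne.symm hux) (Ne.symm hvx)) ck.2
    have e2 : q y ck.2 = p y ck.2 := congrFun (hqo y (Ne.symm huy) (Ne.symm hvy)) ck.2
    have e3 : q u ck.2 = p y ck.2 := congrFun hqu ck.2
    have e4 : q v ck.2 = p x ck.2 := congrFun hqv ck.2
    simp only [hRow, e1, e2, e3, e4]
    split_ifs <;> ring
  ---- the main combination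
  have hmain : ∑ e ∈ V'.subtype (· ∈ G.edgeSet), (fun e : ↥G.edgeSet => c0 ↑e) e •
      eRow d p (e : ↥G.edgeSet).1 = 0 := by
    funext ck
    rw [Finset.sum_apply]
    simp only [Pi.smul_apply, smul_eq_mul, Pi.zero_apply]
    have hsub : ∑ e ∈ V'.subtype (· ∈ G.edgeSet), c0 ↑e * eRow d p (↑e : Sym2 ν) ck
        = ∑ e ∈ V' with e ∈ G.edgeSet, c0 e * eRow d p e ck :=
      Finset.sum_subtype_eq_sum_filter (fun e => c0 e * eRow d p e ck) (p := (· ∈ G.edgeSet))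
    rw [hsub, Finset.sum_filter]
    have hHV' : ∑ e ∈ V', L e * eRow d q e ck = 0 := by
      have hvan : ∀ e ∈ V', e ∉ V₀ → L e * eRow d q e ck = 0 := by
        intro e _ hne
        rw [hLnot e hne, zero_mul]
      rw [← Finset.sum_subset hV₀V' hvan]
      exact H0 ck
    set D : Sym2 ν → ℝ := fun e =>
      (if e ∈ G.edgeSet then c0 e * eRow d p e ck else 0) - L e * eRow d q e ck with hDdef
    have hsplit : ∑ e ∈ V', (if e ∈ G.edgeSet then c0 e * eRow d p e ck else 0)
        = (∑ e ∈ V', D e) + ∑ e ∈ V', L e * eRow d q e ck := by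
      rw [← Finset.sum_add_distrib]
      refine Finset.sum_congr rfl fun e _ => ?_
      simp only [hDdef]
      ring
    rw [hsplit, hHV', add_zero]
    -- reduce to the four special edges
    have hsub4 : insert s(x,y) (insert s(u,x) (insert s(v,y) ({s(u,v)} : Finset (Sym2 ν))))
        ⊆ V' := by
      intro e he
      simp only [Finset.mem_insert, Finset.mem_singleton] at he
      simp only [hV'def, Finset.mem_insert]
      tauto
    have hD0 : ∀ e ∈ V',
        e ∉ insert s(x,y) (insert s(u,x) (insert s(v,y) ({s(u,v)} : Finset (Sym2 ν)))) →
        D e = 0 := by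
      intro e heV' hens
      simp only [Finset.mem_insert, Finset.mem_singleton] at hens
      push_neg at hens
      obtain ⟨hn1, hn2, hn3, hn4⟩ := hens
      have heV₀ : e ∈ V₀ := by
        simp only [hV'def, Finset.mem_insert] at heV'
        rcases heV' with rfl | rfl | rfl | rfl | h
        · exact absurd rfl hn1
        · exact absurd rfl hn2
        · exact absurd rfl hn3
        · exact absurd rfl hn4
        · exact h
      rcases (hE' e).1 (hV₀E e heV₀) with ⟨heG, hne⟩ | ⟨w, hw, rfl⟩ | ⟨w, hw, rfl⟩ | rfl
      · have hrow : eRow d q e = eRow d p e := by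
          refine eRow_congr p q e fun c hc => ?_
          have h1 : c ≠ u := fun h => (hGe e heG).1 (h ▸ hc)
          have h2 : c ≠ v := fun h => (hGe e heG).2 (h ▸ hc)
          exact hqo c h1 h2
        simp only [hDdef, if_pos heG, hc0def, if_neg hne, hrow]
        ring
      · have hwx : w ≠ x := by
          rintro rfl
          exact hn2 rfl
        have hnG : s(u,w) ∉ G.edgeSet := by
          rw [SimpleGraph.mem_edgeSet]
          exact hu w
        simp only [hDdef, if_neg hnG, hLu0 w hw hwx, zero_mul, sub_zero]
      · have hwy : w ≠ y := by
          rintro rfl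
          exact hn3 rfl
        have hnG : s(v,w) ∉ G.edgeSet := by
          rw [SimpleGraph.mem_edgeSet]
          exact hv w
        simp only [hDdef, if_neg hnG, hLv0 w hw hwy, zero_mul, sub_zero]
      · exact absurd rfl hn4
    rw [← Finset.sum_subset hsub4 hD0]
    -- evaluate the four terms
    have hm1 : s(x,y) ∉ insert s(u,x) (insert s(v,y) ({s(u,v)} : Finset (Sym2 ν))) := by
      simp only [Finset.mem_insert, Finset.mem_singleton]
      push_neg
      exact ⟨hd1, hd2, hd3⟩
    have hm2 : s(u,x) ∉ insert s(v,y) ({s(u,v)} : Finset (Sym2 ν)) := by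
      simp only [Finset.mem_insert, Finset.mem_singleton]
      push_neg
      exact ⟨hd4, hd5⟩
    have hm3 : s(v,y) ∉ ({s(u,v)} : Finset (Sym2 ν)) := by
      simp only [Finset.mem_singleton]
      exact hd6
    rw [Finset.sum_insert hm1, Finset.sum_insert hm2, Finset.sum_insert hm3,
      Finset.sum_singleton]
    have hxyG : s(x,y) ∈ G.edgeSet := (SimpleGraph.mem_edgeSet G).2 hxy
    have hD1 : D s(x,y) = (t * sgn u v) * hRow d p x y ck := by
      simp only [hDdef, hc0def, if_pos rfl, if_pos hxyG, hLxy, zero_mul, sub_zero]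
      rw [eRow_eq_smul]
      simp only [Pi.smul_apply, smul_eq_mul]
      calc sgn u v * sgn x y * t * (sgn x y * hRow d p x y ck)
          = (t * sgn u v) * ((sgn x y * sgn x y) * hRow d p x y ck) := by ring
      _ = (t * sgn u v) * hRow d p x y ck := by rw [sgn_mul_self, one_mul]
    have hLuxval : L s(u,x) = -(t * sgn u v) * sgn u x := by
      calc L s(u,x) = (L s(u,x) * sgn u x) * sgn u x := by
            rw [mul_assoc, sgn_mul_self, mul_one]
      _ = -(t * sgn u v) * sgn u x := by
            have h9 : L s(u,x) * sgn u x = -(t * sgn u v) := by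
              rw [htdef]; linarith [hLux]
            rw [h9]
    have hLvyval : L s(v,y) = (t * sgn u v) * sgn v y := by
      calc L s(v,y) = (L s(v,y) * sgn v y) * sgn v y := by
            rw [mul_assoc, sgn_mul_self, mul_one]
      _ = (t * sgn u v) * sgn v y := by
            have h9 : L s(v,y) * sgn v y = t * sgn u v := by
              rw [htdef]; linarith [hLvy]
            rw [h9]
    have hD2 : D s(u,x) = (t * sgn u v) * hRow d q u x ck := by
      have hnG : s(u,x) ∉ G.edgeSet := by
        rw [SimpleGraph.mem_edgeSet]
        exact hu x
      simp only [hDdef, if_neg hnG, zero_sub]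
      rw [eRow_eq_smul, hLuxval]
      simp only [Pi.smul_apply, smul_eq_mul]
      calc -(-(t * sgn u v) * sgn u x * (sgn u x * hRow d q u x ck))
          = (t * sgn u v) * ((sgn u x * sgn u x) * hRow d q u x ck) := by ring
      _ = (t * sgn u v) * hRow d q u x ck := by rw [sgn_mul_self, one_mul]
    have hD3 : D s(v,y) = -((t * sgn u v) * hRow d q v y ck) := by
      have hnG : s(v,y) ∉ G.edgeSet := by
        rw [SimpleGraph.mem_edgeSet]
        exact hv y
      simp only [hDdef, if_neg hnG, zero_sub]
      rw [eRow_eq_smul, hLvyval]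
      simp only [Pi.smul_apply, smul_eq_mul]
      calc -((t * sgn u v) * sgn v y * (sgn v y * hRow d q v y ck))
          = -((t * sgn u v) * ((sgn v y * sgn v y) * hRow d q v y ck)) := by ring
      _ = -((t * sgn u v) * hRow d q v y ck) := by rw [sgn_mul_self, one_mul]
    have hD4 : D s(u,v) = -((t * sgn u v) * hRow d q u v ck) := by
      have hnG : s(u,v) ∉ G.edgeSet := by
        rw [SimpleGraph.mem_edgeSet]
        exact hu v
      have hc0uv : c0 s(u,v) = L s(u,v) := by
        simp only [hc0def, if_neg (Ne.symm hd3)]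
      simp only [hDdef, if_neg hnG, zero_sub]
      rw [eRow_eq_smul, ← htdef]
      simp only [Pi.smul_apply, smul_eq_mul]
      ring
    rw [hD1, hD2, hD3, hD4]
    have hI := hIdent ck
    linear_combination (t * sgn u v) * hI
  ---- apply the independence of the rows of G
  have hGp : LinearIndependent ℝ (fun e : G.edgeSet => eRow d p e.1) := hG p hp
  rw [linearIndependent_iff'] at hGp
  have hall := hGp (V'.subtype (· ∈ G.edgeSet)) (fun e : ↥G.edgeSet => c0 ↑e) hmain
  have ht0 : t = 0 := by
    have hmem : (⟨s(x,y), (SimpleGraph.mem_edgeSet G).2 hxy⟩ : ↥G.edgeSet)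
        ∈ V'.subtype (· ∈ G.edgeSet) := by
      rw [Finset.mem_subtype]
      simp only [hV'def, Finset.mem_insert]
      tauto
    have h0 := hall _ hmem
    simp only [hc0def, if_pos rfl] at h0
    have h1 : sgn x y * (sgn u v * (sgn u v * sgn x y * t)) = sgn x y * (sgn u v * 0) := by
      rw [h0]
    calc t = (sgn x y * sgn x y) * ((sgn u v * sgn u v) * t) := by
          rw [sgn_mul_self, sgn_mul_self, one_mul, one_mul]
    _ = sgn x y * (sgn u v * (sgn u v * sgn x y * t)) := by ring
    _ = 0 := by rw [h1]; ring
  have hLG : ∀ (e : Sym2 ν), e ∈ V₀ → e ∈ G.edgeSet → e ≠ s(x,y) → L e = 0 := by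
    intro e heV₀ heG hne
    have hmem : (⟨e, heG⟩ : ↥G.edgeSet) ∈ V'.subtype (· ∈ G.edgeSet) := by
      rw [Finset.mem_subtype]
      exact hV₀V' heV₀
    have h0 := hall _ hmem
    simpa only [hc0def, if_neg hne] using h0
  ---- conclude that l = 0
  ext e
  show l e = 0
  have hle : l e = L ↑e := by rw [hLval ↑e e.2, Subtype.coe_eta]
  rw [hle]
  rcases (hE' ↑e).1 e.2 with ⟨heG, hne⟩ | ⟨w, hw, hew⟩ | ⟨w, hw, hew⟩ | hew
  · by_contra h0
    exact h0 (hLG ↑e (hLmem ↑e h0) heG hne)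
  · rw [hew]
    by_cases hwx : w = x
    · subst hwx
      calc L s(u,w) = (L s(u,w) * sgn u w) * sgn u w := by
            rw [mul_assoc, sgn_mul_self, mul_one]
      _ = 0 := by
            have h9 : L s(u,w) * sgn u w = -(t * sgn u v) := by
              rw [htdef]; linarith [hLux]
            rw [h9, ht0]
            ring
    · exact hLu0 w hw hwx
  · rw [hew]
    by_cases hwy : w = y
    · subst hwy
      calc L s(v,w) = (L s(v,w) * sgn v w) * sgn v w := by
            rw [mul_assoc, sgn_mul_self, mul_one]
      _ = 0 := by
            have h9 : L s(v,w) * sgn v w = t * sgn u v := by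
              rw [htdef]; linarith [hLvy]
            rw [h9, ht0]
            ring
    · exact hLv0 w hw hwy
  · rw [hew, ← htdef]
    exact ht0
end

section
/- Let k ≥ 2 and p ≥ 1 be integers. Construct G as follows: take disjoint sets A₁,B₁,…,A_p,B_p each of size k with chosen elements aᵢ ∈ Aᵢ, bᵢ ∈ Bᵢ; form the disjoint union of complete bipartite graphs on (Aᵢ,Bᵢ); then identify the sets B₁−b₁, …, B_p−b_p with each other, and identify the vertices a₁,…,a_p with each other. Then |V(G)| = k(p+1) and τ(G) ≤ k + p = |V(G)|/k + (k−1). -/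
/-- The vertex set of the example: the common vertex `a` (the identification of
`a₁,…,a_p`), the sets `Aᵢ − aᵢ` (of size `k−1`, for `i < p`), the vertices
`b₁,…,b_p`, and the common set `B − b` (of size `k−1`, the identification of the
sets `Bᵢ − bᵢ`). -/
abbrev LYvert (k p : ℕ) : Type := Unit ⊕ (Fin p × Fin (k - 1)) ⊕ Fin p ⊕ Fin (k - 1)

/-- The set `Aᵢ = {a} ∪ (Aᵢ − aᵢ)`. -/
def LYsideA (k p : ℕ) (i : Fin p) : Set (LYvert k p) :=
  {Sum.inl ()} ∪ {w | ∃ j, w = Sum.inr (Sum.inl (i, j))}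

/-- The set `Bᵢ = {bᵢ} ∪ (B − b)`. -/
def LYsideB (k p : ℕ) (i : Fin p) : Set (LYvert k p) :=
  {Sum.inr (Sum.inr (Sum.inl i))} ∪ {w | ∃ j, w = Sum.inr (Sum.inr (Sum.inr j))}

/-- The graph obtained from the disjoint union of the complete bipartite graphs on
`(Aᵢ, Bᵢ)` by identifying `B₁ − b₁, …, B_p − b_p` with each other and identifying
`a₁, …, a_p` with each other. -/
def LYgraph (k p : ℕ) : SimpleGraph (LYvert k p) :=
  SimpleGraph.fromRel (fun u w => ∃ i, u ∈ LYsideA k p i ∧ w ∈ LYsideB k p i)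

/-- the graph above has `k(p+1)` vertices and vertex cover number at
most `k + p = |V(G)|/k + (k−1)`. -/
theorem LY_example_card_and_cover (k p : ℕ) (hk : 2 ≤ k) (hp : 1 ≤ p) :
    Nat.card (LYvert k p) = k * (p + 1) ∧
    (∃ C : Set (LYvert k p),
      (∀ u w, (LYgraph k p).Adj u w → u ∈ C ∨ w ∈ C) ∧ C.ncard ≤ k + p) ∧
    k + p = k * (p + 1) / k + (k - 1) := by
  have hk1 : k - 1 + 1 = k := by omega
  refine ⟨?_, ?_, ?_⟩
  · obtain ⟨m, rfl⟩ : ∃ m, k = m + 1 := ⟨k - 1, by omega⟩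
    simp [Nat.card_eq_fintype_card]
    ring
  · set C : Set (LYvert k p) :=
      Set.range (fun x : Unit ⊕ Fin p ⊕ Fin (k - 1) => x.map id Sum.inr) with hC
    refine ⟨C, ?_, ?_⟩
    · intro u w huw
      rw [LYgraph, SimpleGraph.fromRel_adj] at huw
      obtain ⟨-, h | h⟩ := huw
      · obtain ⟨i, -, hw⟩ := h
        right
        rcases hw with hw | ⟨j, rfl⟩
        · exact ⟨Sum.inr (Sum.inl i), by simp_all⟩
        · exact ⟨Sum.inr (Sum.inr j), by simp⟩
      · obtain ⟨i, -, hu⟩ := h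
        left
        rcases hu with hu | ⟨j, rfl⟩
        · exact ⟨Sum.inr (Sum.inl i), by simp_all⟩
        · exact ⟨Sum.inr (Sum.inr j), by simp⟩
    · have hinj : Function.Injective
          (fun x : Unit ⊕ Fin p ⊕ Fin (k - 1) => (x.map id Sum.inr : LYvert k p)) := by
        intro a b hab
        cases a <;> cases b <;> simp_all [Sum.map]
      calc C.ncard = Nat.card C := (Nat.card_coe_set_eq _).symm
        _ = Nat.card (Unit ⊕ Fin p ⊕ Fin (k - 1)) := (Nat.card_range_of_injective hinj)
        _ = 1 + (p + (k - 1)) := by simp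
        _ ≤ k + p := by omega
  · rw [Nat.mul_div_cancel_left _ (by omega : 0 < k)]
    omega
end

section
/- Let a, b, k be positive integers with k = 2ab − 1 and (a,b) ≠ (1,1). Let G₀ be a k-connected, k-regular bipartite graph on parts X₀, Y₀ of equal size s > k. Let G be obtained from G₀ by splitting each vertex v of G₀ into a set A_v of k degree-one vertices (each inheriting one edge of v) and a set B_v of k new vertices, and adding all edges between A_v and B_v. If r is a submodular function on subsets of E(G) with r(E(G_v)) = (a+b)k − ab for each copy G_v of K_{k,k} induced by A_v ∪ B_v, and r(F) ≤ |F| for every edge set F, then r(E(G)) ≤ a|X| + b|Y| − s < a|X| + b|Y| − ab, where (X,Y) is the bipartition of G with |X| = |Y| = 2sk. -/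
/-- `(A, B)` is a bipartition of the graph `G`. -/
def SimpleGraph.IsBipartitionOf {V : Type*} (G : SimpleGraph V) (A B : Set V) : Prop :=
  A ∪ B = Set.univ ∧ Disjoint A B ∧ ∀ u v, G.Adj u v → (u ∈ A ↔ v ∈ B)

/-- `G` is `k`-connected: more than `k` vertices, and `G − W` is connected whenever `|W| < k`. -/
def KConn {V : Type*} [Finite V] (k : ℕ) (G : SimpleGraph V) : Prop :=
  k < Nat.card V ∧ ∀ W : Set V, Nat.card W < k → (G.induce Wᶜ).Connected

lemma LY_r_union_le {α : Type*} (r : Set α → ℕ)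
    (hsub : ∀ F₁ F₂, r (F₁ ∪ F₂) + r (F₁ ∩ F₂) ≤ r F₁ + r F₂) (A B : Set α) :
    r (A ∪ B) ≤ r A + r B :=
  le_trans (Nat.le_add_right _ _) (hsub A B)

lemma LY_r_biUnion_le {α ι : Type*} (r : Set α → ℕ)
    (hsub : ∀ F₁ F₂, r (F₁ ∪ F₂) + r (F₁ ∩ F₂) ≤ r F₁ + r F₂)
    (h0 : r ∅ = 0) (t : Finset ι) (f : ι → Set α) :
    r (⋃ i ∈ t, f i) ≤ ∑ i ∈ t, r (f i) := by
  classical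
  induction t using Finset.induction_on with
  | empty => simp [h0]
  | insert _ _ hx ih =>
      rw [Finset.set_biUnion_insert, Finset.sum_insert hx]
      exact (LY_r_union_le r hsub _ _).trans (Nat.add_le_add_left ih _)

/-- the Lovász–Yemini-type example. `G₀` is a `k`-connected,
`k`-regular bipartite graph (the `k`-regularity being witnessed by the
equivalences `φ v : Fin k ≃ N(v)`) on parts `X₀, Y₀` of size `s > k`, where
`k = 2ab − 1` and `(a,b) ≠ (1,1)`. The graph `G` is obtained by splitting each
vertex `v` into a set `A_v` of `k` degree-one vertices (the vertex `inl (v,i)`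
inheriting the edge of `v` towards `φ v i`) and a set `B_v` of `k` new vertices,
with all edges between `A_v` and `B_v`. If `r` is submodular, `r(F) ≤ |F|` for
every edge set `F`, and `r(E(G_v)) = (a+b)k − ab` for each gadget `G_v ≅ K_{k,k}`,
then `r(E(G)) ≤ a|X| + b|Y| − s < a|X| + b|Y| − ab`, where `(X,Y)` is the
bipartition of `G`, with `|X| = |Y| = 2sk`. -/
theorem LY_birigidity_example {ν₀ : Type*} [Fintype ν₀] (a b k s : ℕ)
    (ha : 0 < a) (hb : 0 < b) (hk : k = 2 * a * b - 1) (hab : ¬(a = 1 ∧ b = 1))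
    (G₀ : SimpleGraph ν₀) (X₀ Y₀ : Set ν₀) (hbip : G₀.IsBipartitionOf X₀ Y₀)
    (hX₀ : Nat.card X₀ = s) (hY₀ : Nat.card Y₀ = s) (hs : k < s)
    (hconn : KConn k G₀)
    (φ : ∀ v : ν₀, Fin k ≃ {w : ν₀ // G₀.Adj v w})
    (G : SimpleGraph (ν₀ × Fin k ⊕ ν₀ × Fin k))
    (hG : G = SimpleGraph.fromRel (fun uu ww =>
      (∃ v i j, uu = Sum.inl (v, i) ∧ ww = Sum.inr (v, j)) ∨
      (∃ v v' i j, uu = Sum.inl (v, i) ∧ ww = Sum.inl (v', j) ∧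
        (φ v i : ν₀) = v' ∧ (φ v' j : ν₀) = v)))
    (X Y : Set (ν₀ × Fin k ⊕ ν₀ × Fin k))
    (hX : X = {u | ∃ v ∈ X₀, ∃ i, u = Sum.inl (v, i)} ∪
              {u | ∃ v ∈ Y₀, ∃ i, u = Sum.inr (v, i)})
    (hY : Y = {u | ∃ v ∈ Y₀, ∃ i, u = Sum.inl (v, i)} ∪
              {u | ∃ v ∈ X₀, ∃ i, u = Sum.inr (v, i)})
    (r : Set (Sym2 (ν₀ × Fin k ⊕ ν₀ × Fin k)) → ℕ)
    (hsub : ∀ F₁ F₂, r (F₁ ∪ F₂) + r (F₁ ∩ F₂) ≤ r F₁ + r F₂)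
    (hcard : ∀ F, r F ≤ F.ncard)
    (hGv : ∀ v : ν₀,
      r {e | ∃ i j, e = s(Sum.inl (v, i), Sum.inr (v, j))} = (a + b) * k - a * b) :
    Nat.card X = 2 * s * k ∧ Nat.card Y = 2 * s * k ∧
    (r G.edgeSet : ℤ) ≤ a * Nat.card X + b * Nat.card Y - s ∧
    (a * Nat.card X + b * Nat.card Y - s : ℤ) <
      a * Nat.card X + b * Nat.card Y - a * b := by
  classical
  subst hG hX hY
  obtain ⟨hcov, hdisj, hadjbip⟩ := hbip
  -- arithmetic facts
  have hab2 : 2 ≤ a * b := by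
    rcases Nat.lt_or_ge a 2 with h1 | h1
    · have ha1 : a = 1 := by omega
      have hb2 : 2 ≤ b := by
        rcases Nat.lt_or_ge b 2 with h2 | h2
        · exact absurd ⟨ha1, by omega⟩ hab
        · exact h2
      calc 2 ≤ b := hb2
        _ = a * b := by rw [ha1, one_mul]
    · calc 2 = 2 * 1 := rfl
        _ ≤ a * b := Nat.mul_le_mul h1 hb
  have hk' : k = 2 * (a * b) - 1 := by rw [hk, mul_assoc]
  have hk1 : k + 1 = 2 * (a * b) := by omega
  have habk : a * b ≤ k := by omega
  -- cardinality of the prod sets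
  have hXk : Nat.card ↥(X₀ ×ˢ (Set.univ : Set (Fin k))) = s * k := by
    rw [Nat.card_congr (Equiv.Set.prod _ _), Nat.card_prod,
      Nat.card_congr (Equiv.Set.univ _)]
    rw [hX₀, Nat.card_eq_fintype_card, Fintype.card_fin]
  have hYk : Nat.card ↥(Y₀ ×ˢ (Set.univ : Set (Fin k))) = s * k := by
    rw [Nat.card_congr (Equiv.Set.prod _ _), Nat.card_prod,
      Nat.card_congr (Equiv.Set.univ _)]
    rw [hY₀, Nat.card_eq_fintype_card, Fintype.card_fin]
  -- the two parts as images
  have eXl : {u : ν₀ × Fin k ⊕ ν₀ × Fin k | ∃ v ∈ X₀, ∃ i, u = Sum.inl (v, i)}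
      = Sum.inl '' (X₀ ×ˢ (Set.univ : Set (Fin k))) := by
    ext u
    constructor
    · rintro ⟨v, hv, i, rfl⟩; exact ⟨(v, i), ⟨hv, trivial⟩, rfl⟩
    · rintro ⟨⟨v, i⟩, ⟨hv, -⟩, rfl⟩; exact ⟨v, hv, i, rfl⟩
  have eYl : {u : ν₀ × Fin k ⊕ ν₀ × Fin k | ∃ v ∈ Y₀, ∃ i, u = Sum.inl (v, i)}
      = Sum.inl '' (Y₀ ×ˢ (Set.univ : Set (Fin k))) := by
    ext u
    constructor
    · rintro ⟨v, hv, i, rfl⟩; exact ⟨(v, i), ⟨hv, trivial⟩, rfl⟩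
    · rintro ⟨⟨v, i⟩, ⟨hv, -⟩, rfl⟩; exact ⟨v, hv, i, rfl⟩
  have eXr : {u : ν₀ × Fin k ⊕ ν₀ × Fin k | ∃ v ∈ X₀, ∃ i, u = Sum.inr (v, i)}
      = Sum.inr '' (X₀ ×ˢ (Set.univ : Set (Fin k))) := by
    ext u
    constructor
    · rintro ⟨v, hv, i, rfl⟩; exact ⟨(v, i), ⟨hv, trivial⟩, rfl⟩
    · rintro ⟨⟨v, i⟩, ⟨hv, -⟩, rfl⟩; exact ⟨v, hv, i, rfl⟩
  have eYr : {u : ν₀ × Fin k ⊕ ν₀ × Fin k | ∃ v ∈ Y₀, ∃ i, u = Sum.inr (v, i)}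
      = Sum.inr '' (Y₀ ×ˢ (Set.univ : Set (Fin k))) := by
    ext u
    constructor
    · rintro ⟨v, hv, i, rfl⟩; exact ⟨(v, i), ⟨hv, trivial⟩, rfl⟩
    · rintro ⟨⟨v, i⟩, ⟨hv, -⟩, rfl⟩; exact ⟨v, hv, i, rfl⟩
  have hdlr : ∀ (A B : Set (ν₀ × Fin k)),
      Disjoint (Sum.inl '' A) (Sum.inr '' B : Set (ν₀ × Fin k ⊕ ν₀ × Fin k)) := by
    intro A B
    rw [Set.disjoint_left]
    rintro x ⟨p, -, rfl⟩ ⟨q, -, hq⟩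
    exact Sum.inl_ne_inr hq.symm
  have cardX : Nat.card ↥({u : ν₀ × Fin k ⊕ ν₀ × Fin k | ∃ v ∈ X₀, ∃ i, u = Sum.inl (v, i)} ∪
      {u | ∃ v ∈ Y₀, ∃ i, u = Sum.inr (v, i)}) = 2 * s * k := by
    rw [Nat.card_coe_set_eq, eXl, eYr,
      Set.ncard_union_eq (hdlr _ _) (Set.toFinite _) (Set.toFinite _),
      Set.ncard_image_of_injective _ Sum.inl_injective,
      Set.ncard_image_of_injective _ Sum.inr_injective,
      ← Nat.card_coe_set_eq, ← Nat.card_coe_set_eq, hXk, hYk]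
    ring
  have cardY : Nat.card ↥({u : ν₀ × Fin k ⊕ ν₀ × Fin k | ∃ v ∈ Y₀, ∃ i, u = Sum.inl (v, i)} ∪
      {u | ∃ v ∈ X₀, ∃ i, u = Sum.inr (v, i)}) = 2 * s * k := by
    rw [Nat.card_coe_set_eq, eYl, eXr,
      Set.ncard_union_eq (hdlr _ _) (Set.toFinite _) (Set.toFinite _),
      Set.ncard_image_of_injective _ Sum.inl_injective,
      Set.ncard_image_of_injective _ Sum.inr_injective,
      ← Nat.card_coe_set_eq, ← Nat.card_coe_set_eq, hXk, hYk]
    ring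
  -- number of original vertices
  have hν : Fintype.card ν₀ = 2 * s := by
    have h1 : (Set.univ : Set ν₀).ncard = X₀.ncard + Y₀.ncard := by
      rw [← hcov, Set.ncard_union_eq hdisj (Set.toFinite _) (Set.toFinite _)]
    rw [Set.ncard_univ, Nat.card_eq_fintype_card] at h1
    rw [h1, ← Nat.card_coe_set_eq, ← Nat.card_coe_set_eq, hX₀, hY₀]
    ring
  -- the edge set decomposition
  set EV : ν₀ → Set (Sym2 (ν₀ × Fin k ⊕ ν₀ × Fin k)) :=
    fun v => {e | ∃ i j, e = s(Sum.inl (v, i), Sum.inr (v, j))} with hEV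
  set E0 : Set (Sym2 (ν₀ × Fin k ⊕ ν₀ × Fin k)) :=
    {e | ∃ v v' i j, e = s(Sum.inl (v, i), Sum.inl (v', j)) ∧
      (φ v i : ν₀) = v' ∧ (φ v' j : ν₀) = v} with hE0
  have hedge : (SimpleGraph.fromRel (fun uu ww =>
      (∃ v i j, uu = Sum.inl (v, i) ∧ ww = Sum.inr (v, j)) ∨
      (∃ v v' i j, uu = Sum.inl (v, i) ∧ ww = Sum.inl (v', j) ∧
        (φ v i : ν₀) = v' ∧ (φ v' j : ν₀) = v))).edgeSet = E0 ∪ ⋃ v, EV v := by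
    ext e
    induction e using Sym2.ind with
    | _ u w =>
      simp only [SimpleGraph.mem_edgeSet, SimpleGraph.fromRel_adj]
      constructor
      · rintro ⟨hne, h | h⟩
        · rcases h with ⟨v, i, j, rfl, rfl⟩ | ⟨v, v', i, j, rfl, rfl, h1, h2⟩
          · exact Or.inr (Set.mem_iUnion.2 ⟨v, ⟨i, j, rfl⟩⟩)
          · exact Or.inl ⟨v, v', i, j, rfl, h1, h2⟩
        · rcases h with ⟨v, i, j, hw, hu⟩ | ⟨v, v', i, j, hw, hu, h1, h2⟩
          · subst hw hu
            exact Or.inr (Set.mem_iUnion.2 ⟨v, ⟨i, j, Sym2.eq_swap⟩⟩)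
          · subst hw hu
            exact Or.inl ⟨v, v', i, j, Sym2.eq_swap, h1, h2⟩
      · rintro (⟨v, v', i, j, he, h1, h2⟩ | h)
        · have hadj : G₀.Adj v v' := h1 ▸ (φ v i).2
          have hvv' : v ≠ v' := hadj.ne
          rw [Sym2.eq_iff] at he
          rcases he with ⟨rfl, rfl⟩ | ⟨rfl, rfl⟩
          · refine ⟨?_, Or.inl (Or.inr ⟨v, v', i, j, rfl, rfl, h1, h2⟩)⟩
            intro hc
            exact hvv' (congrArg Prod.fst (Sum.inl_injective hc))
          · refine ⟨?_, Or.inr (Or.inr ⟨v, v', i, j, rfl, rfl, h1, h2⟩)⟩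
            intro hc
            exact hvv' (congrArg Prod.fst (Sum.inl_injective hc)).symm
        · obtain ⟨v, hv⟩ := Set.mem_iUnion.1 h
          obtain ⟨i, j, he⟩ := hv
          rw [Sym2.eq_iff] at he
          rcases he with ⟨rfl, rfl⟩ | ⟨rfl, rfl⟩
          · exact ⟨by simp, Or.inl (Or.inl ⟨v, i, j, rfl, rfl⟩)⟩
          · exact ⟨by simp, Or.inr (Or.inl ⟨v, i, j, rfl, rfl⟩)⟩
  -- bound on E0
  have hE0card : E0.ncard ≤ s * k := by
    set f : ν₀ × Fin k → Sym2 (ν₀ × Fin k ⊕ ν₀ × Fin k) := fun p =>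
      s(Sum.inl p, Sum.inl ((φ p.1 p.2 : ν₀),
        (φ (φ p.1 p.2 : ν₀)).symm ⟨p.1, ((φ p.1 p.2).2).symm⟩)) with hf
    have hsubf : E0 ⊆ f '' (X₀ ×ˢ (Set.univ : Set (Fin k))) := by
      rintro e ⟨v, v', i, j, rfl, h1, h2⟩
      have hadj : G₀.Adj v v' := h1 ▸ (φ v i).2
      have hvmem : v ∈ X₀ ∨ v ∈ Y₀ := by
        have h := Set.mem_univ v
        rw [← hcov] at h
        exact h
      rcases hvmem with hv | hv
      · refine ⟨(v, i), ⟨hv, trivial⟩, ?_⟩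
        subst h1
        have hx : (φ (φ v i : ν₀)).symm ⟨v, ((φ v i).2).symm⟩ = j :=
          (Equiv.symm_apply_eq _).2 (Subtype.ext h2.symm)
        simp only [hf]
        rw [hx]
      · have hv' : v' ∈ X₀ := (hadjbip v' v hadj.symm).2 hv
        refine ⟨(v', j), ⟨hv', trivial⟩, ?_⟩
        subst h2
        have hx : (φ (φ v' j : ν₀)).symm ⟨v', ((φ v' j).2).symm⟩ = i :=
          (Equiv.symm_apply_eq _).2 (Subtype.ext h1.symm)
        simp only [hf]
        rw [hx]
        exact Sym2.eq_swap
    calc E0.ncard ≤ (f '' (X₀ ×ˢ (Set.univ : Set (Fin k)))).ncard :=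
          Set.ncard_le_ncard hsubf (Set.toFinite _)
      _ ≤ (X₀ ×ˢ (Set.univ : Set (Fin k))).ncard := Set.ncard_image_le (Set.toFinite _)
      _ = s * k := by rw [← Nat.card_coe_set_eq, hXk]
  -- the main bound
  have h0 : r ∅ = 0 := Nat.le_zero.1 (by simpa using hcard ∅)
  have hEVsum : ∀ v : ν₀, r (EV v) = (a + b) * k - a * b := by
    intro v; rw [hEV]; exact hGv v
  have key : r (E0 ∪ ⋃ v, EV v) ≤ s * k + 2 * s * ((a + b) * k - a * b) := by
    have h1 : r (E0 ∪ ⋃ v, EV v) ≤ r E0 + r (⋃ v, EV v) := LY_r_union_le r hsub _ _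
    have h2 : (⋃ v, EV v) = ⋃ v ∈ (Finset.univ : Finset ν₀), EV v := by simp
    have h3 : r (⋃ v, EV v) ≤ ∑ v : ν₀, r (EV v) := by
      rw [h2]; exact LY_r_biUnion_le r hsub h0 _ _
    have h4 : ∑ v : ν₀, r (EV v) = 2 * s * ((a + b) * k - a * b) := by
      rw [Finset.sum_congr rfl fun v _ => hEVsum v, Finset.sum_const, Finset.card_univ,
        hν, smul_eq_mul]
    have h5 : r E0 ≤ s * k := (hcard E0).trans hE0card
    omega
  rw [hedge]
  refine ⟨cardX, cardY, ?_, ?_⟩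
  · rw [cardX, cardY]
    have hk1' : (k : ℤ) + 1 = 2 * (a * b) := by exact_mod_cast hk1
    have hle : a * b ≤ (a + b) * k :=
      le_trans habk (Nat.le_mul_of_pos_left k (by omega))
    have hcast : ((s * k + 2 * s * ((a + b) * k - a * b) : ℕ) : ℤ)
        = s * k + 2 * s * (((a : ℤ) + b) * k - a * b) := by
      push_cast [Nat.cast_sub hle]
      ring
    calc (r (E0 ∪ ⋃ v, EV v) : ℤ)
        ≤ ((s * k + 2 * s * ((a + b) * k - a * b) : ℕ) : ℤ) := by exact_mod_cast key
      _ = s * k + 2 * s * (((a : ℤ) + b) * k - a * b) := hcast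
      _ = a * (2 * s * k : ℕ) + b * (2 * s * k : ℕ) - s := by
          push_cast
          linear_combination (s : ℤ) * hk1'
  · have habs : a * b < s := by omega
    have h' : ((a * b : ℕ) : ℤ) < s := by exact_mod_cast habs
    push_cast at h' ⊢
    linarith
end
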